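/- arXiv:0712.2913 — 2 statements merged into one kernel-verified Lean document; each statement's English description precedes it below -/
import Mathlib

section
/- (Failure of C⁰-rigidity for multiple brackets.) For every n ≥ 1 there exists N ∈ ℕ, depending only on n, with the following property: for any functions F_1, …, F_N ∈ C_c^∞(ℝ^{2n}) and any ε > 0, there exist F'_1, …, F'_N ∈ C_c^∞(ℝ^{2n}) with ‖F'_i − F_i‖ < ε for all i such that the iterated Poisson bracket vanishes identically: {F'_1, {F'_2, …, {F'_{N−1}, F'_N}…}} ≡ 0. -/
/-- The phase space `ℝ^{2n} = ℝ^n × ℝ^n` with coordinates `(p, q)`. -/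
abbrev Phase (n : ℕ) := (Fin n → ℝ) × (Fin n → ℝ)

/-- Partial derivative `∂F/∂p_i`. -/
noncomputable def pderivP {n : ℕ} (F : Phase n → ℝ) (i : Fin n) (x : Phase n) : ℝ :=
  fderiv ℝ F x (Pi.single i 1, 0)

/-- Partial derivative `∂F/∂q_i`. -/
noncomputable def pderivQ {n : ℕ} (F : Phase n → ℝ) (i : Fin n) (x : Phase n) : ℝ :=
  fderiv ℝ F x (0, Pi.single i 1)

/-- The standard Poisson bracket
`{F,G} = Σ i, (∂F/∂q_i · ∂G/∂p_i − ∂F/∂p_i · ∂G/∂q_i)`. -/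
noncomputable def poisson {n : ℕ} (F G : Phase n → ℝ) (x : Phase n) : ℝ :=
  ∑ i : Fin n, (pderivQ F i x * pderivP G i x - pderivP F i x * pderivQ G i x)

/-- `F ∈ C_c^∞(ℝ^{2n})`: smooth and compactly supported. -/
def SmoothCpt {n : ℕ} (F : Phase n → ℝ) : Prop :=
  ContDiff ℝ (⊤ : ℕ∞) F ∧ HasCompactSupport F

/-- The uniform (C⁰) norm `‖F‖ = sup_x |F x|`. -/
noncomputable def unif {n : ℕ} (F : Phase n → ℝ) : ℝ := ⨆ x, |F x|

/-- The iterated Poisson bracket `{F₁, {F₂, …, {F_{N−1}, F_N}…}}`, bracketing from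
the right. -/
noncomputable def iterPoisson {n : ℕ} : List (Phase n → ℝ) → Phase n → ℝ
  | [] => fun _ => 0
  | [F] => F
  | F :: G :: rest => poisson F (iterPoisson (G :: rest))

open Real Set Metric MeasureTheory Filter
open scoped ENNReal NNReal



noncomputable def stair (a β δ : ℝ) (m : ℕ) (t : ℝ) : ℝ :=
  ∑ k ∈ Finset.Icc (-(m : ℤ)) (m : ℤ),
    β * Real.smoothTransition ((t - (a + (k : ℝ) * β - δ)) / (2 * δ))

lemma stair_contDiff (a β δ : ℝ) (m : ℕ) : ContDiff ℝ (⊤ : ℕ∞) (stair a β δ m) := by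
  apply ContDiff.sum
  intro k _
  exact contDiff_const.mul
    (Real.smoothTransition.contDiff.comp ((contDiff_id.sub contDiff_const).div_const _))

lemma stair_eventuallyEq_const {a β δ : ℝ} {m : ℕ} {t₀ : ℝ} (hδ : 0 < δ)
    (h : ∀ k : ℤ, δ < |t₀ - (a + (k : ℝ) * β)|) :
    stair a β δ m =ᶠ[nhds t₀] fun _ => stair a β δ m t₀ := by
  have H : ∀ k ∈ Finset.Icc (-(m : ℤ)) (m : ℤ), ∀ᶠ t in nhds t₀,
      Real.smoothTransition ((t - (a + (k : ℝ) * β - δ)) / (2 * δ)) =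
      Real.smoothTransition ((t₀ - (a + (k : ℝ) * β - δ)) / (2 * δ)) := by
    intro k _
    have hk := h k
    set g : ℝ := a + (k : ℝ) * β with hg
    rcases lt_abs.1 hk with h1 | h1
    · -- t₀ > g + δ : both arguments ≥ 1
      have hev : ∀ᶠ t in nhds t₀, g + δ < t := eventually_gt_nhds (by linarith)
      filter_upwards [hev] with t ht
      rw [Real.smoothTransition.one_of_one_le, Real.smoothTransition.one_of_one_le]
      · rw [le_div_iff₀ (by positivity)]; linarith
      · rw [le_div_iff₀ (by positivity)]; linarith
    · -- t₀ < g - δ : both arguments ≤ 0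
      have hev : ∀ᶠ t in nhds t₀, t < g - δ := eventually_lt_nhds (by linarith)
      filter_upwards [hev] with t ht
      rw [Real.smoothTransition.zero_of_nonpos, Real.smoothTransition.zero_of_nonpos]
      · exact div_nonpos_of_nonpos_of_nonneg (by linarith) (by positivity)
      · exact div_nonpos_of_nonpos_of_nonneg (by linarith) (by positivity)
  have := (Filter.eventually_all_finite (Finset.Icc (-(m : ℤ)) (m : ℤ)).finite_toSet).2
    (fun k hk => H k (by simpa using hk))
  filter_upwards [this] with t ht
  exact Finset.sum_congr rfl fun k hk => by rw [ht k (by simpa using hk)]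

lemma stair_fderiv_zero {a β δ : ℝ} {m : ℕ} {t₀ : ℝ} (hδ : 0 < δ)
    (h : ∀ k : ℤ, δ < |t₀ - (a + (k : ℝ) * β)|) :
    fderiv ℝ (stair a β δ m) t₀ = 0 := by
  rw [(stair_eventuallyEq_const hδ h).fderiv_eq]
  exact fderiv_const_apply _

lemma card_filter_grid {a β : ℝ} (hβ : 0 < β) (m : ℕ) (u : ℝ)
    (h1 : -(m : ℝ) ≤ (u - a) / β) (h2 : (u - a) / β ≤ m) :
    (((Finset.Icc (-(m : ℤ)) (m : ℤ)).filter fun k : ℤ => a + (k : ℝ) * β ≤ u).card : ℝ)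
      = (⌊(u - a) / β⌋ : ℝ) + m + 1 := by
  have hf1 : -(m : ℤ) ≤ ⌊(u - a) / β⌋ := Int.le_floor.2 (by push_cast; exact h1)
  have hf2 : ⌊(u - a) / β⌋ ≤ (m : ℤ) := by
    have := Int.floor_mono h2
    simpa using this
  have heq : ((Finset.Icc (-(m : ℤ)) (m : ℤ)).filter fun k : ℤ => a + (k : ℝ) * β ≤ u)
      = Finset.Icc (-(m : ℤ)) ⌊(u - a) / β⌋ := by
    ext k
    simp only [Finset.mem_filter, Finset.mem_Icc]
    have hiff : a + (k : ℝ) * β ≤ u ↔ k ≤ ⌊(u - a) / β⌋ := by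
      rw [Int.le_floor, le_div_iff₀ hβ]
      constructor <;> intro h <;> linarith
    rw [hiff]
    omega
  rw [heq, Int.card_Icc]
  have h4 : ((⌊(u - a) / β⌋ + 1 - -(m : ℤ)).toNat : ℤ) = ⌊(u - a) / β⌋ + m + 1 := by omega
  exact_mod_cast h4

lemma stair_le_card {a β δ : ℝ} (hβ : 0 < β) (hδ : 0 < δ) (m : ℕ) (t : ℝ) :
    stair a β δ m t ≤
      β * ((Finset.Icc (-(m : ℤ)) (m : ℤ)).filter fun k : ℤ => a + (k : ℝ) * β ≤ t + δ).card := by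
  have hle : ∀ k ∈ Finset.Icc (-(m : ℤ)) (m : ℤ),
      β * Real.smoothTransition ((t - (a + (k : ℝ) * β - δ)) / (2 * δ))
        ≤ (if a + (k : ℝ) * β ≤ t + δ then β else 0) := by
    intro k _
    by_cases h : a + (k : ℝ) * β ≤ t + δ
    · simp only [h, if_true]
      nlinarith [Real.smoothTransition.le_one ((t - (a + (k : ℝ) * β - δ)) / (2 * δ))]
    · simp only [h, if_false]
      rw [Real.smoothTransition.zero_of_nonpos, mul_zero]
      exact div_nonpos_of_nonpos_of_nonneg (by push_neg at h; linarith) (by positivity)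
  calc stair a β δ m t ≤ ∑ k ∈ Finset.Icc (-(m : ℤ)) (m : ℤ),
        (if a + (k : ℝ) * β ≤ t + δ then β else 0) := Finset.sum_le_sum hle
    _ = ∑ k ∈ (Finset.Icc (-(m : ℤ)) (m : ℤ)).filter (fun k : ℤ => a + (k : ℝ) * β ≤ t + δ), β :=
        (Finset.sum_filter _ _).symm
    _ = _ := by rw [Finset.sum_const, nsmul_eq_mul, mul_comm]

lemma card_le_stair {a β δ : ℝ} (hβ : 0 < β) (hδ : 0 < δ) (m : ℕ) (t : ℝ) :
    β * ((Finset.Icc (-(m : ℤ)) (m : ℤ)).filter fun k : ℤ => a + (k : ℝ) * β ≤ t - δ).card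
      ≤ stair a β δ m t := by
  calc β * ((Finset.Icc (-(m : ℤ)) (m : ℤ)).filter fun k : ℤ => a + (k : ℝ) * β ≤ t - δ).card
      = ∑ k ∈ (Finset.Icc (-(m : ℤ)) (m : ℤ)).filter (fun k : ℤ => a + (k : ℝ) * β ≤ t - δ), β := by
        rw [Finset.sum_const, nsmul_eq_mul, mul_comm]
    _ = ∑ k ∈ Finset.Icc (-(m : ℤ)) (m : ℤ),
        (if a + (k : ℝ) * β ≤ t - δ then β else 0) := Finset.sum_filter _ _
    _ ≤ stair a β δ m t := by
        apply Finset.sum_le_sum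
        intro k _
        by_cases h : a + (k : ℝ) * β ≤ t - δ
        · simp only [h, if_true]
          rw [Real.smoothTransition.one_of_one_le, mul_one]
          rw [le_div_iff₀ (by positivity)]; linarith
        · simp only [h, if_false]
          exact mul_nonneg hβ.le (Real.smoothTransition.nonneg _)

lemma stair_bound {a β δ M : ℝ} {m : ℕ} (hβ : 0 < β) (hδ : 0 < δ) (hδβ : δ ≤ β)
    (hM : 0 ≤ M) (hm : M + 2 * β + |a| ≤ (m : ℝ) * β) {t : ℝ} (ht : |t| ≤ M) :
    |stair a β δ m t - stair a β δ m 0 - t| ≤ β + 2 * δ := by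
  have habs := abs_le.1 ht
  have haa := abs_le.1 (le_refl |a|)
  have hrange : ∀ u : ℝ, -(M + δ) ≤ u → u ≤ M + δ →
      -(m : ℝ) ≤ (u - a) / β ∧ (u - a) / β ≤ m := by
    intro u hu1 hu2
    constructor
    · rw [le_div_iff₀ hβ]; nlinarith [abs_nonneg a]
    · rw [div_le_iff₀ hβ]; nlinarith [abs_nonneg a]
  -- floor bounds for the four relevant values
  have key : ∀ u : ℝ, -(M + δ) ≤ u → u ≤ M + δ →
      u - a - β < β * (⌊(u - a) / β⌋ : ℝ) ∧ β * (⌊(u - a) / β⌋ : ℝ) ≤ u - a := by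
    intro u _ _
    have hdiv : β * ((u - a) / β) = u - a := by field_simp
    constructor
    · have h := Int.sub_one_lt_floor ((u - a) / β)
      have h2 := mul_lt_mul_of_pos_left h hβ
      rw [mul_sub, hdiv] at h2; linarith
    · have h := Int.floor_le ((u - a) / β)
      have h2 := mul_le_mul_of_nonneg_left h hβ.le
      rw [hdiv] at h2; linarith
  obtain ⟨r1, r2⟩ := hrange (t + δ) (by linarith) (by linarith)
  obtain ⟨r3, r4⟩ := hrange (t - δ) (by linarith) (by linarith)
  obtain ⟨r5, r6⟩ := hrange δ (by linarith) (by linarith)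
  obtain ⟨r7, r8⟩ := hrange (-δ) (by linarith) (by linarith)
  have c1 := card_filter_grid hβ m (t + δ) r1 r2
  have c2 := card_filter_grid hβ m (t - δ) r3 r4
  have c3 := card_filter_grid hβ m δ r5 r6
  have c4 := card_filter_grid hβ m (-δ) r7 r8
  have u1 := stair_le_card (a := a) hβ hδ m t
  have l1 := card_le_stair (a := a) hβ hδ m t
  have u2 := stair_le_card (a := a) hβ hδ m 0
  have l2 := card_le_stair (a := a) hβ hδ m 0
  rw [zero_add] at u2
  rw [zero_sub] at l2
  rw [c1] at u1
  rw [c2] at l1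
  rw [c3] at u2
  rw [c4] at l2
  obtain ⟨f1a, f1b⟩ := key (t + δ) (by linarith) (by linarith)
  obtain ⟨f2a, f2b⟩ := key (t - δ) (by linarith) (by linarith)
  obtain ⟨f3a, f3b⟩ := key δ (by linarith) (by linarith)
  obtain ⟨f4a, f4b⟩ := key (-δ) (by linarith) (by linarith)
  rw [abs_le]
  constructor <;> linarith

lemma poisson_zero_left {n : ℕ} {F G : Phase n → ℝ} {x : Phase n}
    (h : fderiv ℝ F x = 0) : poisson F G x = 0 := by
  unfold poisson pderivP pderivQ
  simp [h]

lemma poisson_zero_right {n : ℕ} {F G : Phase n → ℝ} {x : Phase n}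
    (h : fderiv ℝ G x = 0) : poisson F G x = 0 := by
  unfold poisson pderivP pderivQ
  simp [h]

lemma fderiv_zero_of_vanish_outside {n : ℕ} {f : Phase n → ℝ} {s : Set (Phase n)}
    (hs : IsClosed s) (hf : ∀ y ∉ s, f y = 0) {x : Phase n} (hx : x ∉ s) :
    fderiv ℝ f x = 0 := by
  have hev : f =ᶠ[nhds x] fun _ => (0 : ℝ) := by
    filter_upwards [hs.isOpen_compl.mem_nhds hx] with y hy using hf y hy
  rw [hev.fderiv_eq]
  exact fderiv_const_apply _

lemma iter_vanish {n : ℕ} : ∀ L : List ((Phase n → ℝ) × Set (Phase n)),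
    2 ≤ L.length →
    (∀ p ∈ L, IsClosed p.2) →
    (∀ p ∈ L, ∀ x ∉ p.2, fderiv ℝ p.1 x = 0) →
    ∀ x : Phase n, ¬ (∀ p ∈ L, x ∈ p.2) → iterPoisson (L.map Prod.fst) x = 0 := by
  intro L
  induction L with
  | nil => intro h; simp at h
  | cons p T ih =>
    intro hlen hcl hder x hx
    match T, ih with
    | [], _ => simp at hlen
    | q :: rest, ih =>
      have hiter : iterPoisson (((p :: q :: rest).map Prod.fst)) x
          = poisson p.1 (iterPoisson ((q :: rest).map Prod.fst)) x := by
        simp [iterPoisson]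
      rw [hiter]
      push_neg at hx
      obtain ⟨r, hrmem, hrx⟩ := hx
      rcases List.mem_cons.1 hrmem with rfl | hrT
      · exact poisson_zero_left (hder r List.mem_cons_self x hrx)
      · -- x fails some set in the tail
        have hxT : ¬ (∀ p ∈ q :: rest, x ∈ p.2) := fun h => hrx (h r hrT)
        have hfd : fderiv ℝ (iterPoisson ((q :: rest).map Prod.fst)) x = 0 := by
          match rest with
          | [] =>
            -- tail is a single function q
            have : r = q := by simpa using hrT
            subst this
            have : iterPoisson ((r :: ([] : List ((Phase n → ℝ) × Set (Phase n)))).map Prod.fst)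
                = r.1 := by simp [iterPoisson]
            rw [this]
            exact hder r (by simp) x hrx
          | s :: rest' =>
            have hclT : IsClosed {y : Phase n | ∀ p ∈ q :: s :: rest', y ∈ p.2} := by
              have : {y : Phase n | ∀ p ∈ q :: s :: rest', y ∈ p.2}
                  = ⋂ p ∈ (q :: s :: rest' : List _), p.2 := by
                ext y; simp; tauto
              rw [this]
              exact isClosed_biInter fun p hp => hcl p (List.mem_cons_of_mem _ hp)
            apply fderiv_zero_of_vanish_outside hclT
            · intro y hy
              exact ih (by simp) (fun p hp => hcl p (List.mem_cons_of_mem _ hp))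
                (fun p hp => hder p (List.mem_cons_of_mem _ hp)) y hy
            · exact hxT
        exact poisson_zero_right hfd


/-- **Failure of C⁰-rigidity for multiple brackets.** For every `n ≥ 1` there is an
`N ∈ ℕ`, depending only on `n`, such that any `N` functions in `C_c^∞(ℝ^{2n})` admit
arbitrarily uniformly-close smooth compactly supported perturbations whose iterated
Poisson bracket `{F'_1, {F'_2, …, {F'_{N−1}, F'_N}…}}` vanishes identically. -/
theorem iterated_bracket_flexible (n : ℕ) (hn : 1 ≤ n) :
    ∃ N : ℕ, 1 ≤ N ∧
      ∀ F : Fin N → Phase n → ℝ, (∀ i, SmoothCpt (F i)) →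
        ∀ ε > (0 : ℝ), ∃ F' : Fin N → Phase n → ℝ,
          (∀ i, SmoothCpt (F' i) ∧ unif (fun x => F' i x - F i x) < ε) ∧
          ∀ x, iterPoisson (List.ofFn F') x = 0 := by
  refine ⟨n + n + 1, by omega, ?_⟩
  set N := n + n + 1 with hN
  intro F hF ε hε
  set β : ℝ := ε / 4 with hβdef
  have hβ : 0 < β := by positivity
  -- a uniform bound on all the `F i`
  have hbd : ∀ i, ∃ C : ℝ, ∀ x, |F i x| ≤ C := by
    intro i
    obtain ⟨C, hC⟩ := (hF i).2.exists_bound_of_continuous (hF i).1.continuous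
    exact ⟨C, fun x => by simpa using hC x⟩
  choose C hC using hbd
  set M : ℝ := ∑ i, |C i| with hMdef
  have hMle : ∀ i x, |F i x| ≤ M := by
    intro i x
    refine le_trans (le_trans (hC i x) (le_abs_self _)) ?_
    exact Finset.single_le_sum (f := fun i => |C i|) (fun j _ => abs_nonneg _) (Finset.mem_univ i)
  have hM0 : 0 ≤ M := le_trans (abs_nonneg _) (hMle ⟨0, by omega⟩ (0, 0))
  -- the joint map and its small range
  set Φ : Phase n → (Fin N → ℝ) := fun x i => F i x with hΦdef
  have hΦc : ContDiff ℝ 1 Φ := contDiff_pi.2 fun i => ((hF i).1.of_le (by exact_mod_cast le_top))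
  have hdim : dimH (Set.range Φ) ≤ ((n + n : ℕ) : ℝ≥0∞) := by
    have h := hΦc.dimH_range_le
    have hfr : Module.finrank ℝ (Phase n) = n + n := by
      simp [Module.finrank_prod, Module.finrank_pi]
    rwa [hfr] at h
  have hvol : volume (Set.range Φ) = 0 := by
    have hlt : dimH (Set.range Φ) < ((N : ℝ≥0) : ℝ≥0∞) := by
      refine lt_of_le_of_lt hdim ?_
      rw [hN]
      norm_cast
      omega
    have h0 : (μH[((N : ℝ≥0) : ℝ)] : Measure (Fin N → ℝ)) (Set.range Φ) = 0 :=
      hausdorffMeasure_of_dimH_lt hlt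
    have hpi : (μH[(Fintype.card (Fin N) : ℝ)] : Measure (Fin N → ℝ)) = volume :=
      hausdorffMeasure_pi_real
    rw [← hpi]
    have hcast : ((Fintype.card (Fin N) : ℝ)) = ((N : ℝ≥0) : ℝ) := by simp
    rw [hcast]
    exact h0
  -- choose good offsets `a`
  have hbadnull : volume (⋃ k : Fin N → ℤ,
      (fun a : Fin N → ℝ => a + fun i => (k i : ℝ) * β) ⁻¹' Set.range Φ) = 0 := by
    refine measure_iUnion_null fun k => ?_
    rw [measure_preimage_add_right]
    exact hvol
  obtain ⟨a, ha⟩ : ∃ a : Fin N → ℝ, ∀ k : Fin N → ℤ,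
      (a + fun i => (k i : ℝ) * β) ∉ Set.range Φ := by
    by_contra h
    push_neg at h
    have huniv : (⋃ k : Fin N → ℤ,
        (fun a : Fin N → ℝ => a + fun i => (k i : ℝ) * β) ⁻¹' Set.range Φ) = univ := by
      refine eq_univ_of_forall fun a => ?_
      obtain ⟨k, hk⟩ := h a
      exact mem_iUnion.2 ⟨k, hk⟩
    rw [huniv] at hbadnull
    exact (isOpen_univ.measure_ne_zero volume univ_nonempty) hbadnull
  -- the grids
  set grid : Fin N → Set ℝ := fun i => Set.range (fun k : ℤ => a i + (k : ℝ) * β) with hgriddef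
  have hgridne : ∀ i, (grid i).Nonempty := fun i => ⟨a i, ⟨0, by simp⟩⟩
  have hgridcl : ∀ i, IsClosed (grid i) := by
    intro i
    have heq : grid i = (fun t : ℝ => (t - a i) / β) ⁻¹' (Set.range ((↑) : ℤ → ℝ)) := by
      ext t
      simp only [hgriddef, mem_preimage, Set.mem_range]
      constructor
      · rintro ⟨k, rfl⟩
        exact ⟨k, by field_simp; ring⟩
      · rintro ⟨k, hk⟩
        refine ⟨k, ?_⟩
        have : t - a i = (k : ℝ) * β := by
          field_simp at hk
          linarith
        linarith
    rw [heq]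
    exact Int.isClosedEmbedding_coe_real.isClosed_range.preimage (by fun_prop)
  -- compactness of the range of Φ
  have hsupp : ∀ i, ∃ R : ℝ, tsupport (F i) ⊆ Metric.closedBall 0 R := fun i =>
    ((hF i).2 : IsCompact (tsupport (F i))).isBounded.subset_closedBall 0
  choose R hR using hsupp
  set R' : ℝ := ∑ i, |R i| with hR'def
  have hRle : ∀ i, R i ≤ R' := fun i =>
    le_trans (le_abs_self _)
      (Finset.single_le_sum (f := fun i => |R i|) (fun j _ => abs_nonneg _) (Finset.mem_univ i))
  have hR'0 : 0 ≤ R' := Finset.sum_nonneg fun i _ => abs_nonneg _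
  set x₀ : Phase n := (fun _ => R' + 1, 0) with hx₀def
  have hx₀norm : R' < ‖x₀‖ := by
    have h1 : ‖(fun _ => R' + 1 : Fin n → ℝ)‖ ≤ ‖x₀‖ := norm_fst_le x₀
    have h2 : |R' + 1| ≤ ‖(fun _ => R' + 1 : Fin n → ℝ)‖ := by
      have := norm_le_pi_norm (fun _ => R' + 1 : Fin n → ℝ) ⟨0, by omega⟩
      simpa using this
    have : R' + 1 ≤ |R' + 1| := le_abs_self _
    linarith
  have hx₀zero : ∀ i, F i x₀ = 0 := by
    intro i
    apply image_eq_zero_of_notMem_tsupport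
    intro hmem
    have := hR i hmem
    rw [Metric.mem_closedBall, dist_zero_right] at this
    linarith [hRle i]
  have hrangeeq : Set.range Φ = Φ '' Metric.closedBall 0 R' ∪ {fun _ => (0 : ℝ)} := by
    apply Subset.antisymm
    · rintro _ ⟨x, rfl⟩
      by_cases hx : x ∈ Metric.closedBall 0 R'
      · exact Or.inl ⟨x, hx, rfl⟩
      · right
        rw [mem_singleton_iff]
        funext i
        show F i x = 0
        apply image_eq_zero_of_notMem_tsupport
        intro hmem
        exact hx (Metric.closedBall_subset_closedBall (hRle i) (hR i hmem))
    · rintro y (⟨x, _, rfl⟩ | hy)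
      · exact ⟨x, rfl⟩
      · rw [mem_singleton_iff] at hy
        subst hy
        exact ⟨x₀, funext fun i => hx₀zero i⟩
  have hKcpt : IsCompact (Set.range Φ) := by
    rw [hrangeeq]
    exact ((isCompact_closedBall _ _).image hΦc.continuous).union isCompact_singleton
  have hKne : (Set.range Φ).Nonempty := range_nonempty _
  -- minimum of distance-to-grids over the range
  set f : (Fin N → ℝ) → ℝ := fun y => ‖fun i => Metric.infDist (y i) (grid i)‖ with hfdef
  have hfc : Continuous f :=
    (continuous_pi fun i => (continuous_infDist_pt (grid i)).comp (continuous_apply i)).norm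
  obtain ⟨y₀, hy₀K, hy₀min'⟩ := hKcpt.exists_isMinOn hKne hfc.continuousOn
  have hy₀min : ∀ y ∈ Set.range Φ, f y₀ ≤ f y := fun y hy => hy₀min' hy
  have hfy₀pos : 0 < f y₀ := by
    rcases (norm_nonneg (fun i => Metric.infDist (y₀ i) (grid i))).lt_or_eq with h | h
    · exact h
    · exfalso
      have hz : (fun i => Metric.infDist (y₀ i) (grid i)) = 0 := norm_eq_zero.1 h.symm
      have hmem : ∀ i, y₀ i ∈ grid i := by
        intro i
        have : Metric.infDist (y₀ i) (grid i) = 0 := congrFun hz i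
        exact ((hgridcl i).mem_iff_infDist_zero (hgridne i)).2 this
      choose k hk using fun i => hmem i
      have : (a + fun i => (k i : ℝ) * β) = y₀ := by
        funext i
        simpa using hk i
      exact ha k (this ▸ hy₀K)
  set δ : ℝ := min (f y₀ / 2) (β / 4) with hδdef
  have hδ : 0 < δ := lt_min (by linarith) (by positivity)
  have hδβ4 : δ ≤ β / 4 := min_le_right _ _
  have hδβ : δ ≤ β := le_trans hδβ4 (by linarith)
  have hδf : δ < f y₀ := lt_of_le_of_lt (min_le_left _ _) (by linarith)
  -- choose m
  set A : ℝ := ∑ i, |a i| with hAdef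
  have hAle : ∀ i, |a i| ≤ A := fun i =>
    Finset.single_le_sum (f := fun i => |a i|) (fun j _ => abs_nonneg _) (Finset.mem_univ i)
  obtain ⟨m, hm⟩ := exists_nat_ge ((M + 2 * β + A) / β)
  have hmβ : ∀ i, M + 2 * β + |a i| ≤ (m : ℝ) * β := by
    intro i
    rw [div_le_iff₀ hβ] at hm
    have := hAle i
    linarith
  -- the perturbations
  set φ : Fin N → ℝ → ℝ := fun i => stair (a i) β δ m with hφdef
  set F' : Fin N → Phase n → ℝ := fun i x => φ i (F i x) - φ i 0 with hF'def
  set Cs : Fin N → Set (Phase n) :=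
    fun i => F i ⁻¹' {t | Metric.infDist t (grid i) ≤ δ} with hCsdef
  have hCscl : ∀ i, IsClosed (Cs i) :=
    fun i => (isClosed_le (continuous_infDist_pt _) continuous_const).preimage
      (hF i).1.continuous
  have hCsder : ∀ i, ∀ x ∉ Cs i, fderiv ℝ (F' i) x = 0 := by
    intro i x hx
    have hdist : δ < Metric.infDist (F i x) (grid i) := by
      simp only [hCsdef, mem_preimage, mem_setOf_eq, not_le] at hx
      exact hx
    have hk : ∀ k : ℤ, δ < |F i x - (a i + (k : ℝ) * β)| := by
      intro k
      refine lt_of_lt_of_le hdist ?_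
      have := Metric.infDist_le_dist_of_mem (x := F i x) (show a i + (k : ℝ) * β ∈ grid i from ⟨k, rfl⟩)
      rwa [Real.dist_eq] at this
    have hφd : fderiv ℝ (φ i) (F i x) = 0 := stair_fderiv_zero hδ hk
    have hdiff1 : DifferentiableAt ℝ (φ i) (F i x) :=
      ((stair_contDiff (a i) β δ m).differentiable (by simp)).differentiableAt
    have hdiff2 : DifferentiableAt ℝ (F i) x :=
      ((hF i).1.differentiable (by simp)).differentiableAt
    have hstep : fderiv ℝ (F' i) x = fderiv ℝ (φ i ∘ F i) x := by
      show fderiv ℝ (fun y => φ i (F i y) - φ i 0) x = _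
      rw [fderiv_sub_const]
      rfl
    rw [hstep, fderiv_comp x hdiff1 hdiff2, hφd, ContinuousLinearMap.zero_comp]
  have hCsempty : ∀ x : Phase n, ∃ i, x ∉ Cs i := by
    intro x
    by_contra h
    push_neg at h
    have hall : ∀ i, Metric.infDist (F i x) (grid i) ≤ δ := by
      intro i
      have := h i
      simpa [hCsdef] using this
    have hfx : f (Φ x) ≤ δ := by
      rw [hfdef]
      refine (pi_norm_le_iff_of_nonneg hδ.le).2 fun i => ?_
      rw [Real.norm_eq_abs, abs_of_nonneg Metric.infDist_nonneg]
      exact hall i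
    have := hy₀min (Φ x) ⟨x, rfl⟩
    linarith
  refine ⟨F', fun i => ⟨⟨?_, ?_⟩, ?_⟩, ?_⟩
  · -- smooth
    exact ((stair_contDiff (a i) β δ m).comp (hF i).1).sub contDiff_const
  · -- compact support
    exact (hF i).2.comp_left (g := fun t => φ i t - φ i 0) (by simp)
  · -- uniform closeness
    have hbound : ∀ x : Phase n, |F' i x - F i x| ≤ β + 2 * δ := by
      intro x
      have h := stair_bound (a := a i) (m := m) hβ hδ hδβ hM0 (hmβ i) (hMle i x)
      have : F' i x - F i x = stair (a i) β δ m (F i x) - stair (a i) β δ m 0 - F i x := by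
        simp [hF'def, hφdef]
      rwa [this]
    have hle : unif (fun x => F' i x - F i x) ≤ β + 2 * δ :=
      Real.iSup_le hbound (by positivity)
    have : β + 2 * δ < ε := by
      rw [hβdef] at hδβ4 ⊢
      linarith
    linarith
  · -- the iterated bracket vanishes
    intro x
    have hlen : 2 ≤ (List.ofFn fun i : Fin N => (F' i, Cs i)).length := by
      rw [List.length_ofFn]
      omega
    have hmap : (List.ofFn fun i : Fin N => (F' i, Cs i)).map Prod.fst = List.ofFn F' := by
      rw [List.map_ofFn]
      rfl
    have hnotall : ¬ ∀ p ∈ (List.ofFn fun i : Fin N => (F' i, Cs i)), x ∈ p.2 := by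
      intro h
      obtain ⟨i, hi⟩ := hCsempty x
      exact hi (h (F' i, Cs i) (List.mem_ofFn.2 ⟨i, rfl⟩))
    have := iter_vanish (List.ofFn fun i : Fin N => (F' i, Cs i)) hlen
      (by
        intro p hp
        rw [List.mem_ofFn] at hp
        obtain ⟨i, rfl⟩ := hp
        exact hCscl i)
      (by
        intro p hp
        rw [List.mem_ofFn] at hp
        obtain ⟨i, rfl⟩ := hp
        exact hCsder i)
      x hnotall
    rwa [hmap] at this
end

section
/- Let F, G ∈ C_c^∞(ℝ^{2n}) with Hamiltonian flows (f_s)_{s∈ℝ} and (g_t)_{t∈ℝ}, and for s,t ∈ ℝ, τ ∈ [0,1], x ∈ ℝ^{2n} set L_{s,t}(x,τ) := s·F(x) − s·F(g_t^{−1}(f_{τs}^{−1}(x))) and K_{s,t}(x,τ) := L_{s,t}(x,τ) − s·t·{F,G}(x). Then ‖K_{s,t}‖ / (st) → 0 as s,t → 0⁺; precisely, for every ε > 0 there exists δ > 0 such that for all s,t with 0 < s < δ and 0 < t < δ, sup_{x∈ℝ^{2n}, τ∈[0,1]} |K_{s,t}(x,τ)| ≤ ε·s·t. -/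
/-- The Hamiltonian vector field `X_H = (−∂H/∂q, ∂H/∂p)`. -/
noncomputable def hamVF {n : ℕ} (H : Phase n → ℝ) (x : Phase n) : Phase n :=
  (fun i => -(pderivQ H i x), fun i => pderivP H i x)

/-- `ψ` is the Hamiltonian flow of `H`: `ψ^0 = id`, the group (flow) law holds, and
`(d/dt) ψ^t x = X_H (ψ^t x)`. -/
def IsHamFlow {n : ℕ} (H : Phase n → ℝ) (ψ : ℝ → Phase n → Phase n) : Prop :=
  (∀ x, ψ 0 x = x) ∧ (∀ s t x, ψ (s + t) x = ψ s (ψ t x)) ∧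
  (∀ x t, HasDerivAt (fun s => ψ s x) (hamVF H (ψ t x)) t)

section Aux

variable {n : ℕ}

/-- Decomposition of a continuous linear map on `Phase n` over the standard basis. -/
lemma clm_apply_eq (L : Phase n →L[ℝ] ℝ) (v : Phase n) :
    L v = (∑ i, v.1 i * L (Pi.single i 1, 0)) + ∑ i, v.2 i * L (0, Pi.single i 1) := by
  have h1 : (v.1, (0 : Fin n → ℝ)) =
      ∑ i, v.1 i • (((Pi.single i (1:ℝ)) : Fin n → ℝ), (0 : Fin n → ℝ)) := by
    refine Prod.ext ?_ ?_
    · simp only [Prod.fst_sum, Prod.smul_mk]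
      funext j
      simp [Finset.sum_apply, Pi.single_apply, Finset.sum_ite_eq']
    · simp [Prod.snd_sum]
  have h2 : ((0 : Fin n → ℝ), v.2) =
      ∑ i, v.2 i • ((0 : Fin n → ℝ), ((Pi.single i (1:ℝ)) : Fin n → ℝ)) := by
    refine Prod.ext ?_ ?_
    · simp [Prod.fst_sum]
    · simp only [Prod.snd_sum, Prod.smul_mk]
      funext j
      simp [Finset.sum_apply, Pi.single_apply, Finset.sum_ite_eq']
  have hv : v = (v.1, (0 : Fin n → ℝ)) + ((0 : Fin n → ℝ), v.2) := by
    refine Prod.ext ?_ ?_ <;> simp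
  have hL1 : ∀ (a : ℝ) (w : Fin n → ℝ), L (a • w, 0) = a * L (w, 0) := by
    intro a w
    have h : ((a • w, (0 : Fin n → ℝ)) : Phase n) = a • ((w, (0 : Fin n → ℝ)) : Phase n) := by
      simp [Prod.smul_mk]
    rw [h, map_smul, smul_eq_mul]
  have hL2 : ∀ (a : ℝ) (w : Fin n → ℝ), L (0, a • w) = a * L (0, w) := by
    intro a w
    have h : (((0 : Fin n → ℝ), a • w) : Phase n) = a • (((0 : Fin n → ℝ), w) : Phase n) := by
      simp [Prod.smul_mk]
    rw [h, map_smul, smul_eq_mul]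
  calc L v = L ((v.1, (0 : Fin n → ℝ)) + ((0 : Fin n → ℝ), v.2)) := by rw [← hv]
    _ = L (v.1, (0 : Fin n → ℝ)) + L ((0 : Fin n → ℝ), v.2) := map_add _ _ _
    _ = _ := by
        rw [h1, h2, map_sum, map_sum]
        simp only [Prod.smul_mk, smul_zero, hL1, hL2]

lemma fderiv_hamVF (F G : Phase n → ℝ) (x : Phase n) :
    fderiv ℝ F x (hamVF G x) = poisson F G x := by
  rw [clm_apply_eq]
  simp only [hamVF, poisson, pderivP, pderivQ, ← Finset.sum_add_distrib]
  exact Finset.sum_congr rfl fun i _ => by ring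

lemma fderiv_hamVF_self (F : Phase n → ℝ) (x : Phase n) :
    fderiv ℝ F x (hamVF F x) = 0 := by
  rw [fderiv_hamVF]
  simp only [poisson]
  exact Finset.sum_eq_zero fun i _ => by ring

lemma hasDerivAt_flow_neg {H : Phase n → ℝ} {ψ : ℝ → Phase n → Phase n}
    (hψ : IsHamFlow H ψ) (y : Phase n) (u : ℝ) :
    HasDerivAt (fun u => ψ (-u) y) (-hamVF H (ψ (-u) y)) u := by
  have h1 : HasDerivAt (fun s => ψ s y) (hamVF H (ψ (-u) y)) ((fun u : ℝ => -u) u) :=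
    hψ.2.2 y (-u)
  have h2 : HasDerivAt (fun u : ℝ => -u) (-1) u := hasDerivAt_neg u
  have h3 := h1.scomp u h2
  rw [show ((-1 : ℝ) • hamVF H (ψ (-u) y)) = -hamVF H (ψ (-u) y) from neg_one_smul ℝ _] at h3
  exact h3

lemma hasDerivAt_comp_flow_neg {F H : Phase n → ℝ} {ψ : ℝ → Phase n → Phase n}
    (hFd : Differentiable ℝ F) (hψ : IsHamFlow H ψ) (y : Phase n) (u : ℝ) :
    HasDerivAt (fun u => F (ψ (-u) y)) (-(poisson F H (ψ (-u) y))) u := by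
  have h := (hFd (ψ (-u) y)).hasFDerivAt.comp_hasDerivAt u (hasDerivAt_flow_neg hψ y u)
  have h2 : fderiv ℝ F (ψ (-u) y) (-hamVF H (ψ (-u) y)) = -(poisson F H (ψ (-u) y)) := by
    rw [map_neg, fderiv_hamVF]
  rwa [h2] at h

/-- `F` is invariant under its own Hamiltonian flow. -/
lemma flow_invariant {F : Phase n → ℝ} {f : ℝ → Phase n → Phase n}
    (hFd : Differentiable ℝ F) (hf : IsHamFlow F f) (x : Phase n) (a : ℝ) :
    F (f a x) = F x := by
  have h : ∀ u : ℝ, HasDerivAt (fun u => F (f u x)) 0 u := by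
    intro u
    have h := (hFd (f u x)).hasFDerivAt.comp_hasDerivAt u (hf.2.2 x u)
    rwa [fderiv_hamVF_self] at h
  have hc := is_const_of_deriv_eq_zero (f := fun u => F (f u x))
    (fun u => (h u).differentiableAt) (fun u => (h u).deriv) a 0
  simpa [hf.1] using hc

lemma hamVF_continuous {H : Phase n → ℝ} (hH : ContDiff ℝ (⊤ : ℕ∞) H) :
    Continuous (hamVF H) := by
  have hd : Continuous (fderiv ℝ H) := hH.continuous_fderiv (by simp)
  have happ : ∀ v : Phase n, Continuous fun x => fderiv ℝ H x v := fun v =>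
    (ContinuousLinearMap.apply ℝ ℝ v).continuous.comp hd
  unfold hamVF pderivP pderivQ
  exact Continuous.prodMk
    (continuous_pi fun i => ((happ _)).neg)
    (continuous_pi fun i => happ _)

lemma hamVF_compactSupport {H : Phase n → ℝ} (hH : HasCompactSupport H) :
    HasCompactSupport (hamVF H) := by
  apply (hH.fderiv (𝕜 := ℝ)).mono'
  intro x hx
  have : x ∈ Function.support (fderiv ℝ H) := by
    by_contra h
    apply hx
    have h0 : fderiv ℝ H x = 0 := by simpa [Function.mem_support, not_not] using h
    simp only [hamVF, pderivP, pderivQ, h0]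
    simp [Prod.ext_iff]
    rfl
  exact subset_closure this

lemma hamVF_bound {H : Phase n → ℝ} (hH : SmoothCpt H) :
    ∃ C : ℝ, 0 ≤ C ∧ ∀ z, ‖hamVF H z‖ ≤ C := by
  obtain ⟨C, hC⟩ := (hamVF_compactSupport hH.2).exists_bound_of_continuous
    (hamVF_continuous hH.1)
  exact ⟨C, le_trans (norm_nonneg _) (hC 0), hC⟩

lemma poisson_uniformContinuous {F G : Phase n → ℝ} (hF : SmoothCpt F) (hG : SmoothCpt G) :
    UniformContinuous (poisson F G) := by
  have hdF : Continuous (fderiv ℝ F) := hF.1.continuous_fderiv (by simp)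
  have hdG : Continuous (fderiv ℝ G) := hG.1.continuous_fderiv (by simp)
  have happ : ∀ (H : Phase n → ℝ), Continuous (fderiv ℝ H) → ∀ v : Phase n,
      Continuous fun x => fderiv ℝ H x v := fun H h v =>
    (ContinuousLinearMap.apply ℝ ℝ v).continuous.comp h
  have hcont : Continuous (poisson F G) := by
    unfold poisson pderivP pderivQ
    exact continuous_finset_sum _ fun i _ =>
      (((happ F hdF _).mul (happ G hdG _)).sub ((happ F hdF _).mul (happ G hdG _)))
  have hsupp : HasCompactSupport (poisson F G) := by
    apply (hF.2.fderiv (𝕜 := ℝ)).mono'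
    intro x hx
    have : x ∈ Function.support (fderiv ℝ F) := by
      by_contra h
      apply hx
      have h0 : fderiv ℝ F x = 0 := by simpa [Function.mem_support, not_not] using h
      simp [poisson, pderivP, pderivQ, h0]
    exact subset_closure this
  exact hsupp.uniformContinuous_of_continuous hcont

lemma flow_displacement {H : Phase n → ℝ} {ψ : ℝ → Phase n → Phase n}
    (hψ : IsHamFlow H ψ) {C : ℝ} (hC : ∀ z, ‖hamVF H z‖ ≤ C)
    (y : Phase n) {u : ℝ} (hu : 0 ≤ u) : ‖ψ (-u) y - y‖ ≤ C * u := by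
  have key := norm_image_sub_le_of_norm_deriv_le_segment'
    (f := fun v => ψ (-v) y) (f' := fun v => -hamVF H (ψ (-v) y)) (a := 0) (b := u) (C := C)
    (fun v _ => (hasDerivAt_flow_neg hψ y v).hasDerivWithinAt)
    (fun v _ => by simpa using hC _) u (by constructor <;> simp [hu])
  simpa [hψ.1] using key

end Aux

/-- With `L_{s,t}(x,τ) = s·F(x) − s·F(g_t^{−1}(f_{τs}^{−1}(x)))` and
`K_{s,t}(x,τ) = L_{s,t}(x,τ) − s·t·{F,G}(x)`, one has `‖K_{s,t}‖/(st) → 0` as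
`s,t → 0⁺`: for every `ε > 0` there is `δ > 0` such that for all `0 < s < δ`,
`0 < t < δ`, all `x` and all `τ ∈ [0,1]`, `|K_{s,t}(x,τ)| ≤ ε·s·t`. -/
theorem remainder_K_small (n : ℕ) (F G : Phase n → ℝ)
    (hF : SmoothCpt F) (hG : SmoothCpt G)
    (f g : ℝ → Phase n → Phase n)
    (hf : IsHamFlow F f) (hg : IsHamFlow G g) :
    ∀ ε > (0 : ℝ), ∃ δ > (0 : ℝ), ∀ s t : ℝ,
      0 < s → s < δ → 0 < t → t < δ →
      ∀ (x : Phase n) (τ : ℝ), τ ∈ Set.Icc (0 : ℝ) 1 →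
        |s * F x - s * F (g (-t) (f (-(τ * s)) x)) - s * t * poisson F G x|
          ≤ ε * s * t := by
  intro ε hε
  have hFd : Differentiable ℝ F := hF.1.differentiable (by simp)
  obtain ⟨CF, hCF0, hCF⟩ := hamVF_bound hF
  obtain ⟨CG, hCG0, hCG⟩ := hamVF_bound hG
  obtain ⟨δ', hδ'0, hδ'⟩ :=
    Metric.uniformContinuous_iff.mp (poisson_uniformContinuous hF hG) ε hε
  have hden : (0 : ℝ) < CF + CG + 1 := by linarith
  refine ⟨δ' / (CF + CG + 1), div_pos hδ'0 hden, ?_⟩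
  intro s t hs hsδ ht htδ x τ hτ
  set y := f (-(τ * s)) x with hy
  have hFy : F y = F x := flow_invariant hFd hf x _
  -- the distance estimate
  have hdist : ∀ u : ℝ, 0 ≤ u → u ≤ t → dist (g (-u) y) x < δ' := by
    intro u hu0 hut
    have h1 : ‖g (-u) y - y‖ ≤ CG * u := flow_displacement hg hCG y hu0
    have h2 : ‖y - x‖ ≤ CF * (τ * s) := by
      have := flow_displacement hf hCF x (u := τ * s)
        (mul_nonneg hτ.1 hs.le)
      simpa [hy] using this
    have h3 : dist (g (-u) y) x ≤ CG * u + CF * (τ * s) := by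
      calc dist (g (-u) y) x ≤ dist (g (-u) y) y + dist y x := dist_triangle _ _ _
        _ ≤ CG * u + CF * (τ * s) := by
            rw [dist_eq_norm, dist_eq_norm]; exact add_le_add h1 h2
    have hts : τ * s ≤ s := by
      nlinarith [hτ.2, hs.le]
    have hlt : CG * u + CF * (τ * s) < δ' := by
      have h4 : CG * u ≤ CG * t := by nlinarith
      have h5 : CF * (τ * s) ≤ CF * s := by nlinarith
      have h6 : CG * t < CG * (δ' / (CF + CG + 1)) ∨ CG = 0 := by
        rcases eq_or_lt_of_le hCG0 with h | h
        · exact Or.inr h.symm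
        · exact Or.inl (by exact (mul_lt_mul_iff_right₀ h).mpr htδ)
      have h7 : CG * t ≤ CG * (δ' / (CF + CG + 1)) := by nlinarith
      have h8 : CF * s ≤ CF * (δ' / (CF + CG + 1)) := by nlinarith
      have h9 : CG * (δ' / (CF + CG + 1)) + CF * (δ' / (CF + CG + 1)) < δ' := by
        rw [← add_mul]
        have : (CG + CF) * (δ' / (CF + CG + 1)) < (CF + CG + 1) * (δ' / (CF + CG + 1)) := by
          apply mul_lt_mul_of_pos_right (by linarith) (div_pos hδ'0 hden)
        calc (CG + CF) * (δ' / (CF + CG + 1)) < (CF + CG + 1) * (δ' / (CF + CG + 1)) := this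
          _ = δ' := by field_simp
      linarith
    linarith
  -- the mean value estimate for ψ(u) = F (g (-u) y) + u * P x
  set P := poisson F G with hP
  have hderiv : ∀ u : ℝ, HasDerivAt (fun u => F (g (-u) y) + u * P x)
      (-(P (g (-u) y)) + P x) u := by
    intro u
    have h1 := hasDerivAt_comp_flow_neg hFd hg y u
    have h2 : HasDerivAt (fun u : ℝ => u * P x) (P x) u := by
      simpa using (hasDerivAt_id u).mul_const (P x)
    exact h1.add h2
  have hbound : ∀ u ∈ Set.Ico (0 : ℝ) t, ‖-(P (g (-u) y)) + P x‖ ≤ ε := by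
    intro u hu
    have := hδ' (a := g (-u) y) (b := x) (hdist u hu.1 hu.2.le)
    rw [Real.dist_eq] at this
    rw [Real.norm_eq_abs]
    calc |(-(P (g (-u) y)) + P x)| = |P (g (-u) y) - P x| := by rw [← abs_neg]; ring_nf
      _ ≤ ε := this.le
  have hmvt := norm_image_sub_le_of_norm_deriv_le_segment'
    (f := fun u => F (g (-u) y) + u * P x) (f' := fun u => -(P (g (-u) y)) + P x)
    (a := 0) (b := t) (C := ε)
    (fun u _ => (hderiv u).hasDerivWithinAt) hbound t (by constructor <;> simp [ht.le])
  simp only [neg_zero, hg.1, zero_mul, add_zero] at hmvt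
  -- hmvt : ‖F (g (-t) y) + t * P x - F y‖ ≤ ε * (t - 0)
  have key : |F (g (-t) y) + t * P x - F y| ≤ ε * t := by
    have : ε * (t - 0) = ε * t := by ring
    rw [← this]
    simpa [Real.norm_eq_abs] using hmvt
  have : |s * F x - s * F (g (-t) y) - s * t * P x| = s * |F (g (-t) y) + t * P x - F y| := by
    rw [hFy]
    have h := abs_mul s (F (g (-t) y) + t * P x - F x)
    rw [abs_of_pos hs] at h
    rw [← h, ← abs_neg]
    congr 1
    ring
  rw [this]
  calc s * |F (g (-t) y) + t * P x - F y| ≤ s * (ε * t) :=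
        mul_le_mul_of_nonneg_left key hs.le
    _ = ε * s * t := by ring
end
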